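/- For t > 0 and z = a - ik ∈ ℂ, the trace of T_z e^{-tH} on L²(ℝ) equals (1/√2)·(cosh t − 1)^{-1/2}·exp(−a²·(cosh t + 1)/(4 sinh t) − k²·sinh t/(4(cosh t − 1))). In particular, if z ≠ 0 then tr(T_z e^{-tH}) = O(t^∞) as t → 0⁺, and if z = 0 then tr(e^{-tH}) = 1/t + O(1) as t → 0⁺. -/

import Mathlib

open Complex Asymptotics Filter

/-- Mehler's formula for the heat kernel of the quantum harmonic oscillator
`H = (1/2)(x² - d²/dx²)`:
`e^{-tH}(x,y) = (2π sinh t)^{-1/2} exp(−coth t·(x²+y²)/2 + xy/sinh t)`. -/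
noncomputable def mehlerKernel (t x y : ℝ) : ℂ :=
  (((Real.sqrt (2 * Real.pi * Real.sinh t))⁻¹ : ℝ) : ℂ) *
    Complex.exp (((-(Real.cosh t / Real.sinh t) * ((x ^ 2 + y ^ 2) / 2)
      + x * y / Real.sinh t : ℝ) : ℂ))

/-- The trace of `T_z e^{-tH}` on `L²(ℝ)`, computed as the integral over the diagonal of the
Schwartz kernel of `T_z e^{-tH}`, where for `z = a - ik` the Heisenberg-Weyl operator is
`T_z u(x) = e^{i(kx - ak/2)} u(x-a)`. -/
noncomputable def heatTraceTz (t : ℝ) (z : ℂ) : ℂ :=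
  ∫ x : ℝ, Complex.exp (I * ((((-z.im) : ℝ) : ℂ) * x - z.re * (-z.im) / 2)) *
    mehlerKernel t (x - z.re) x

lemma exp_aux {x : ℝ} (hx : |x| ≤ 1) : |Real.exp x - (1 + x)| ≤ 3/4 * x^2 := by
  have h := Real.exp_bound hx (by norm_num : 0 < 2)
  simp [Finset.sum_range_succ] at h
  norm_num at h
  linarith

lemma sinh_le_quad {x : ℝ} (h0 : 0 ≤ x) (h1 : x ≤ 1) : Real.sinh x ≤ x + x^2 := by
  have hx : |x| ≤ 1 := by rwa [_root_.abs_of_nonneg h0]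
  have hx' : |(-x)| ≤ 1 := by rwa [abs_neg]
  have h1' := exp_aux hx
  have h2' := exp_aux hx'
  rw [Real.sinh_eq]
  rw [abs_le] at h1' h2'
  have := h1'.2
  have := h2'.1
  nlinarith [sq_nonneg x]

lemma self_le_sinh' {x : ℝ} (h0 : 0 ≤ x) : x ≤ Real.sinh x := by
  rcases eq_or_lt_of_le h0 with h | h
  · simp [← h]
  · exact (Real.self_lt_sinh_iff.2 h).le

lemma cosh_sub_one (x : ℝ) : Real.cosh x - 1 = 2 * Real.sinh (x/2)^2 := by
  have h := Real.cosh_two_mul (x/2)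
  rw [show 2*(x/2) = x by ring, Real.cosh_sq] at h
  rw [h]; ring



theorem heatTraceTz_formula (z : ℂ) (t : ℝ) (ht : 0 < t) :
    heatTraceTz t z =
      ((((Real.sqrt 2)⁻¹ * (Real.sqrt (Real.cosh t - 1))⁻¹ *
        Real.exp (-(z.re ^ 2 * (Real.cosh t + 1) / (4 * Real.sinh t))
          - (-z.im) ^ 2 * Real.sinh t / (4 * (Real.cosh t - 1)))) : ℝ) : ℂ) := by

  set s : ℝ := Real.sinh t with hsdef
  set ch : ℝ := Real.cosh t with hchdef
  have hs : 0 < s := Real.sinh_pos_iff.2 ht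
  have hch : 1 < ch := Real.one_lt_cosh.2 ht.ne'
  have hch1 : 0 < ch - 1 := by linarith
  set β : ℝ := (ch - 1) / s with hβdef
  have hβ : 0 < β := div_pos hch1 hs
  have hsc : (s : ℂ) ≠ 0 := by exact_mod_cast hs.ne'
  have hβc : (β : ℂ) ≠ 0 := by exact_mod_cast hβ.ne'
  set b : ℂ := ((-β : ℝ) : ℂ) with hbdef
  set c : ℂ := ((z.re * β : ℝ) : ℂ) + I * ((-z.im : ℝ) : ℂ) with hcdef
  set d : ℂ := ((-(ch / s) * z.re ^ 2 / 2 : ℝ) : ℂ)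
      + I * ((-(z.re * (-z.im) / 2) : ℝ) : ℂ) with hddef
  have hb : b.re < 0 := by simp [hbdef, hβ]
  have step1 : heatTraceTz t z =
      (((Real.sqrt (2 * Real.pi * s))⁻¹ : ℝ) : ℂ) *
        ∫ x : ℝ, Complex.exp (b * (x:ℂ) ^ 2 + c * x + d) := by
    rw [heatTraceTz, ← MeasureTheory.integral_const_mul]
    congr 1
    funext x
    rw [mehlerKernel, ← hsdef, ← hchdef]
    rw [mul_left_comm, ← Complex.exp_add]
    congr 2
    rw [hbdef, hcdef, hddef, hβdef]
    push_cast
    field_simp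
    ring
  rw [step1, integral_cexp_quadratic hb c d]
  have hπβ : (0:ℝ) ≤ Real.pi / β := div_nonneg Real.pi_pos.le hβ.le
  have hpow : ((Real.pi : ℂ) / -b) ^ (1 / 2 : ℂ) = ((Real.sqrt (Real.pi / β) : ℝ) : ℂ) := by
    have h0 : ((Real.pi : ℂ) / -b) = ((Real.pi / β : ℝ) : ℂ) := by
      rw [hbdef]; push_cast; ring
    rw [h0, show ((1:ℂ)/2) = ((1/2 : ℝ) : ℂ) by norm_num,
      ← Complex.ofReal_cpow hπβ, Real.sqrt_eq_rpow]
  have hc2 : c ^ 2 = ((z.re^2 * β^2 - z.im^2 : ℝ) : ℂ)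
      + ((2 * z.re * β * (-z.im) : ℝ) : ℂ) * I := by
    rw [hcdef]; push_cast
    linear_combination ((z.im:ℝ):ℂ)^2 * Complex.I_sq
  have hexpA : d - c ^ 2 / (4 * b) =
      ((-(ch / s) * z.re ^ 2 / 2 + (z.re^2 * β^2 - z.im^2) / (4 * β) : ℝ) : ℂ) := by
    rw [hc2, hddef, hbdef]
    push_cast
    field_simp
    ring
  have hexpB : -(ch / s) * z.re ^ 2 / 2 + (z.re^2 * β^2 - z.im^2) / (4 * β) =
      -(z.re ^ 2 * (ch + 1) / (4 * s)) - (-z.im) ^ 2 * s / (4 * (ch - 1)) := by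
    rw [hβdef]
    field_simp
    ring
  rw [hpow, hexpA, hexpB, ← Complex.ofReal_exp, ← Complex.ofReal_mul, ← Complex.ofReal_mul]
  congr 1
  have hfac : (Real.sqrt (2 * Real.pi * s))⁻¹ * Real.sqrt (Real.pi / β) =
      (Real.sqrt 2)⁻¹ * (Real.sqrt (ch - 1))⁻¹ := by
    have h1 : Real.pi / β = (2 * Real.pi * s) / (2 * (ch - 1)) := by
      rw [hβdef]; field_simp
    rw [h1, Real.sqrt_div (by positivity), Real.sqrt_mul (by norm_num : (0:ℝ) ≤ 2)]
    have p1 : (0:ℝ) < Real.sqrt (2 * Real.pi * s) := Real.sqrt_pos.2 (by positivity)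
    have p2 : (0:ℝ) < Real.sqrt 2 := by positivity
    have p3 : (0:ℝ) < Real.sqrt (ch - 1) := Real.sqrt_pos.2 hch1
    field_simp
  rw [← mul_assoc, hfac]

/-- For `t > 0` and `z = a - ik`,
`tr(T_z e^{-tH}) = (1/√2)(cosh t − 1)^{-1/2} exp(−a²(cosh t + 1)/(4 sinh t) − k² sinh t/(4(cosh t − 1)))`;
if `z ≠ 0` then `tr(T_z e^{-tH}) = O(t^∞)` as `t → 0⁺`, and if `z = 0` then
`tr(e^{-tH}) = 1/t + O(1)` as `t → 0⁺`. -/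
theorem heatTraceTz_eq (z : ℂ) :
    (∀ t : ℝ, 0 < t →
      heatTraceTz t z =
        ((((Real.sqrt 2)⁻¹ * (Real.sqrt (Real.cosh t - 1))⁻¹ *
          Real.exp (-(z.re ^ 2 * (Real.cosh t + 1) / (4 * Real.sinh t))
            - (-z.im) ^ 2 * Real.sinh t / (4 * (Real.cosh t - 1)))) : ℝ) : ℂ)) ∧
    (z ≠ 0 → ∀ N : ℕ,
      (fun t : ℝ => heatTraceTz t z) =O[nhdsWithin 0 (Set.Ioi 0)] fun t : ℝ => t ^ N) ∧
    (z = 0 →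
      (fun t : ℝ => heatTraceTz t z - 1 / (t : ℂ)) =O[nhdsWithin 0 (Set.Ioi 0)]
        fun _ : ℝ => (1 : ℝ)) := by
  refine ⟨fun t ht => heatTraceTz_formula z t ht, fun hz N => ?_, fun hz => ?_⟩
  · have hsq : 0 < z.re^2 + z.im^2 := by
      simpa [Complex.normSq_apply, sq] using Complex.normSq_pos.mpr hz
    set c : ℝ := (z.re^2 + z.im^2)/8 with hcdef
    have hc : 0 < c := by positivity
    rw [isBigO_iff]
    refine ⟨(Nat.factorial (N+1) : ℝ) / c^(N+1), ?_⟩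
    filter_upwards [Ioc_mem_nhdsGT (zero_lt_one)] with t ht
    obtain ⟨ht0, ht1⟩ := ht
    rw [heatTraceTz_formula z t ht0]
    set s : ℝ := Real.sinh t with hsdef
    set ch : ℝ := Real.cosh t with hchdef
    have hs : 0 < s := Real.sinh_pos_iff.2 ht0
    have hch : 1 < ch := Real.one_lt_cosh.2 ht0.ne'
    have hch1 : 0 < ch - 1 := by linarith
    have hsl : t ≤ s := self_le_sinh' ht0.le
    have hsu : s ≤ 2*t := by
      have := sinh_le_quad ht0.le ht1
      nlinarith
    have hsh2 : Real.sinh (t/2) ≤ t/2 + (t/2)^2 :=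
      sinh_le_quad (by linarith) (by linarith)
    have hsh2' : t/2 ≤ Real.sinh (t/2) := self_le_sinh' (by linarith)
    have hcl : t^2/2 ≤ ch - 1 := by
      rw [hchdef, cosh_sub_one]; nlinarith
    have hshnn : 0 ≤ Real.sinh (t/2) := le_trans (by linarith) hsh2'
    have hcu : ch - 1 ≤ 2*t^2 := by
      rw [hchdef, cosh_sub_one]
      have hsq2 : Real.sinh (t/2)^2 ≤ (t/2 + (t/2)^2)^2 := by
        apply pow_le_pow_left₀ hshnn hsh2
      nlinarith [hsq2, mul_le_mul_of_nonneg_left ht1 (mul_nonneg ht0.le ht0.le),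
        mul_le_mul_of_nonneg_left ht1 (mul_nonneg (mul_nonneg ht0.le ht0.le) ht0.le)]
    -- exponent bound
    have hexp : -(z.re ^ 2 * (ch + 1) / (4 * s)) - (-z.im) ^ 2 * s / (4 * (ch - 1))
        ≤ -(c/t) := by
      have h1 : z.re^2/(8*t) ≤ z.re^2*(ch+1)/(4*s) := by
        rw [div_le_div_iff₀ (by positivity) (by positivity)]
        nlinarith [mul_le_mul_of_nonneg_left hsu (sq_nonneg z.re),
          mul_le_mul_of_nonneg_left (show (2:ℝ) ≤ ch + 1 by linarith)
            (mul_nonneg (sq_nonneg z.re) ht0.le),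
          mul_nonneg (mul_nonneg (sq_nonneg z.re) ht0.le) (show (0:ℝ) ≤ ch + 1 by linarith)]
      have h2 : z.im^2/(8*t) ≤ (-z.im)^2*s/(4*(ch-1)) := by
        rw [div_le_div_iff₀ (by positivity) (by positivity)]
        nlinarith [mul_le_mul_of_nonneg_left hcu (sq_nonneg z.im),
          mul_le_mul_of_nonneg_left hsl
            (mul_nonneg (sq_nonneg z.im) (mul_nonneg (show (0:ℝ) ≤ 8 by norm_num) ht0.le))]
      have : c/t = z.re^2/(8*t) + z.im^2/(8*t) := by rw [hcdef]; ring
      linarith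
    have hexp2 : Real.exp (-(z.re ^ 2 * (ch + 1) / (4 * s)) - (-z.im) ^ 2 * s / (4 * (ch - 1)))
        ≤ (Nat.factorial (N+1) : ℝ) * t^(N+1) / c^(N+1) := by
      calc Real.exp _ ≤ Real.exp (-(c/t)) := Real.exp_le_exp.2 hexp
        _ = (Real.exp (c/t))⁻¹ := by rw [Real.exp_neg]
        _ ≤ ((c/t)^(N+1)/(Nat.factorial (N+1) : ℝ))⁻¹ := by
            have hfl : (0:ℝ) < (c/t)^(N+1)/(Nat.factorial (N+1) : ℝ) := by positivity
            exact inv_anti₀ hfl (Real.pow_div_factorial_le_exp (c/t) (div_nonneg hc.le ht0.le) (N+1))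
        _ = (Nat.factorial (N+1) : ℝ) * t^(N+1) / c^(N+1) := by
            rw [div_pow, inv_div]
            field_simp
    have hpre : (Real.sqrt 2)⁻¹ * (Real.sqrt (ch - 1))⁻¹ ≤ 1/t := by
      have p2 : (0:ℝ) < Real.sqrt 2 := by positivity
      have p3 : (0:ℝ) < Real.sqrt (ch - 1) := Real.sqrt_pos.2 hch1
      have h4 : t/Real.sqrt 2 ≤ Real.sqrt (ch-1) := by
        have := Real.sqrt_le_sqrt hcl
        rwa [show t^2/2 = (t/Real.sqrt 2)^2 by
          rw [div_pow, Real.sq_sqrt (by norm_num : (0:ℝ) ≤ 2)],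
          Real.sqrt_sq (by positivity)] at this
      have h5 : (Real.sqrt (ch-1))⁻¹ ≤ Real.sqrt 2/t := by
        rw [show Real.sqrt 2 / t = (t/Real.sqrt 2)⁻¹ by rw [inv_div]]
        exact inv_anti₀ (by positivity) h4
      calc (Real.sqrt 2)⁻¹ * (Real.sqrt (ch - 1))⁻¹
          ≤ (Real.sqrt 2)⁻¹ * (Real.sqrt 2/t) := by
            exact mul_le_mul_of_nonneg_left h5 (by positivity)
        _ = 1/t := by field_simp
    have p3 : (0:ℝ) < Real.sqrt (ch - 1) := Real.sqrt_pos.2 hch1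
    rw [Complex.norm_real, Real.norm_eq_abs, Real.norm_eq_abs, _root_.abs_of_nonneg (by positivity),
      _root_.abs_of_nonneg (by positivity)]
    calc (Real.sqrt 2)⁻¹ * (Real.sqrt (ch - 1))⁻¹ * Real.exp _
        ≤ (1/t) * ((Nat.factorial (N+1) : ℝ) * t^(N+1) / c^(N+1)) := by
          apply mul_le_mul hpre hexp2 (Real.exp_pos _).le (by positivity)
      _ = (Nat.factorial (N+1) : ℝ) / c^(N+1) * t^N := by
          rw [pow_succ]
          field_simp
  · subst hz
    rw [isBigO_iff]
    refine ⟨1, ?_⟩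
    filter_upwards [Ioc_mem_nhdsGT (zero_lt_one)] with t ht
    obtain ⟨ht0, ht1⟩ := ht
    rw [heatTraceTz_formula 0 t ht0]
    set ch : ℝ := Real.cosh t with hchdef
    have hch : 1 < ch := Real.one_lt_cosh.2 ht0.ne'
    have hch1 : 0 < ch - 1 := by linarith
    have hsh2 : Real.sinh (t/2) ≤ t/2 + (t/2)^2 :=
      sinh_le_quad (by linarith) (by linarith)
    have hsh2' : t/2 ≤ Real.sinh (t/2) := self_le_sinh' (by linarith)
    have hshpos : 0 < Real.sinh (t/2) := lt_of_lt_of_le (by linarith) hsh2'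
    have hkey : Real.sqrt 2 * Real.sqrt (ch - 1) = 2 * Real.sinh (t/2) := by
      rw [← Real.sqrt_mul (by norm_num : (0:ℝ) ≤ 2), hchdef, cosh_sub_one,
        show 2*(2*Real.sinh (t/2)^2) = (2*Real.sinh (t/2))^2 by ring,
        Real.sqrt_sq (by positivity)]
    have hval : (Real.sqrt 2)⁻¹ * (Real.sqrt (ch - 1))⁻¹ = (2 * Real.sinh (t/2))⁻¹ := by
      rw [← mul_inv, hkey]
    have hexp0 : (-(Complex.re 0 ^ 2 * (ch + 1) / (4 * Real.sinh t))
        - (-Complex.im 0) ^ 2 * Real.sinh t / (4 * (ch - 1))) = 0 := by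
      simp
    rw [hexp0, Real.exp_zero, mul_one, hval]
    have hcast : 1 / (t:ℂ) = (((2 * Real.sinh (t/2))⁻¹ - ((2 * Real.sinh (t/2))⁻¹ - 1/t) : ℝ) : ℂ) := by
      push_cast; ring
    rw [hcast]
    have hnorm : (((2 * Real.sinh (t/2))⁻¹ : ℝ) : ℂ) -
        (((2 * Real.sinh (t/2))⁻¹ - ((2 * Real.sinh (t/2))⁻¹ - 1/t) : ℝ) : ℂ)
        = ((((2 * Real.sinh (t/2))⁻¹ - 1/t : ℝ)) : ℂ) := by
      push_cast; ring
    rw [hnorm, Complex.norm_real, Real.norm_eq_abs]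
    have hub : 2 * Real.sinh (t/2) ≤ t + t^2/2 := by nlinarith
    have hlb : t ≤ 2 * Real.sinh (t/2) := by linarith
    have h1 : (2 * Real.sinh (t/2))⁻¹ ≤ 1/t := by
      rw [inv_eq_one_div]
      exact one_div_le_one_div_of_le ht0 hlb
    have h2 : 1/t - (2 * Real.sinh (t/2))⁻¹ ≤ 1 := by
      rw [inv_eq_one_div, div_sub_div _ _ ht0.ne' (by positivity : 2 * Real.sinh (t/2) ≠ 0)]
      rw [div_le_one (by positivity)]
      nlinarith
    have : ‖(1:ℝ)‖ = 1 := by norm_num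
    rw [this, mul_one, abs_le]
    constructor <;> linarith
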